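/- For α > 0, the radial function Φ(x) := e^{−α√(1+|x|²)} on ℝ² satisfies (−Δ + α²) Φ ≥ 0 everywhere. -/

import Mathlib

noncomputable def pdx (f : ℝ × ℝ → ℝ) (p : ℝ × ℝ) : ℝ := deriv (fun t => f (t, p.2)) p.1
noncomputable def pdy (f : ℝ × ℝ → ℝ) (p : ℝ × ℝ) : ℝ := deriv (fun t => f (p.1, t)) p.2
noncomputable def lap (f : ℝ × ℝ → ℝ) (p : ℝ × ℝ) : ℝ := pdx (pdx f) p + pdy (pdy f) p

noncomputable def sS (c t : ℝ) : ℝ := Real.sqrt (1 + (t ^ 2 + c))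

lemma sS_pos (c t : ℝ) (hc : 0 ≤ c) : 0 < sS c t :=
  Real.sqrt_pos.mpr (by positivity)

lemma sS_sq (c t : ℝ) (hc : 0 ≤ c) : (sS c t) ^ 2 = 1 + (t ^ 2 + c) :=
  Real.sq_sqrt (by positivity)

lemma hasDerivAt_sS (c x : ℝ) (hc : 0 ≤ c) :
    HasDerivAt (fun t => sS c t) (x / sS c x) x := by
  have h1 : HasDerivAt (fun t : ℝ => 1 + (t ^ 2 + c)) (2 * x) x := by
    simpa using ((hasDerivAt_pow 2 x).add_const c).const_add 1
  have h2 := (Real.hasDerivAt_sqrt (show (1:ℝ) + (x ^ 2 + c) ≠ 0 by positivity)).comp x h1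
  have hs := (sS_pos c x hc).ne'
  refine h2.congr_deriv ?_
  field_simp [sS]
  rw [sS]

noncomputable def g (α c t : ℝ) : ℝ := -α * t / sS c t * Real.exp (-α * sS c t)

lemma hasDerivAt_Phi1 (α c x : ℝ) (hc : 0 ≤ c) :
    HasDerivAt (fun t => Real.exp (-α * Real.sqrt (1 + (t ^ 2 + c)))) (g α c x) x := by
  have h := (((hasDerivAt_sS c x hc).const_mul (-α)).exp)
  convert h using 1
  · rfl
  unfold g
  ring

lemma hasDerivAt_g (α c x : ℝ) (hc : 0 ≤ c) :
    HasDerivAt (g α c)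
      (Real.exp (-α * sS c x) * (α ^ 2 * x ^ 2 / (sS c x) ^ 2 - α * (1 + c) / (sS c x) ^ 3)) x := by
  have hs := sS_pos c x hc
  have hsne := hs.ne'
  have h1 : HasDerivAt (fun t : ℝ => -α * t) (-α) x := by
    simpa using (hasDerivAt_id x).const_mul (-α)
  have h2 : HasDerivAt (fun t => (sS c t)⁻¹) (-(x / sS c x) / (sS c x) ^ 2) x :=
    (hasDerivAt_sS c x hc).inv hsne
  have h3 : HasDerivAt (fun t => Real.exp (-α * sS c t))
      (Real.exp (-α * sS c x) * (-α * (x / sS c x))) x :=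
    ((hasDerivAt_sS c x hc).const_mul (-α)).exp
  have h := (h1.fun_mul h2).fun_mul h3
  have hfun : (fun t => -α * t * (sS c t)⁻¹ * Real.exp (-α * sS c t)) = g α c := by
    funext t; unfold g; ring
  rw [hfun] at h
  refine h.congr_deriv ?_
  have hsq : (sS c x) ^ 2 = 1 + (x ^ 2 + c) := sS_sq c x hc
  rw [show (1:ℝ) + c = (sS c x) ^ 2 - x ^ 2 by linarith]
  field_simp
  ring

/-- For `α > 0`, the function `Φ(x) = e^{-α√(1+|x|²)}` on `ℝ²`
satisfies `(-Δ + α²) Φ ≥ 0` everywhere. -/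
theorem exponential_supersolution
    (α : ℝ) (hα : 0 < α)
    (Φ : ℝ × ℝ → ℝ)
    (hΦ : ∀ p : ℝ × ℝ, Φ p = Real.exp (-α * Real.sqrt (1 + (p.1 ^ 2 + p.2 ^ 2)))) :
    ∀ p : ℝ × ℝ, 0 ≤ -lap Φ p + α ^ 2 * Φ p := by
  intro p
  obtain ⟨x, y⟩ := p
  have hx2 : (0:ℝ) ≤ x ^ 2 := sq_nonneg x
  have hy2 : (0:ℝ) ≤ y ^ 2 := sq_nonneg y
  have hpdx : ∀ a b : ℝ, pdx Φ (a, b) = g α (b ^ 2) a := by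
    intro a b
    have : (fun t => Φ (t, b)) = fun t => Real.exp (-α * Real.sqrt (1 + (t ^ 2 + b ^ 2))) := by
      funext t; exact hΦ (t, b)
    rw [pdx, this]
    exact (hasDerivAt_Phi1 α (b ^ 2) a (sq_nonneg b)).deriv
  have hpdy : ∀ a b : ℝ, pdy Φ (a, b) = g α (a ^ 2) b := by
    intro a b
    have : (fun t => Φ (a, t)) = fun t => Real.exp (-α * Real.sqrt (1 + (t ^ 2 + a ^ 2))) := by
      funext t; rw [hΦ (a, t)]; ring_nf
    rw [pdy, this]
    exact (hasDerivAt_Phi1 α (a ^ 2) b (sq_nonneg a)).deriv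
  have hxx : pdx (pdx Φ) (x, y) =
      Real.exp (-α * sS (y ^ 2) x) *
        (α ^ 2 * x ^ 2 / (sS (y ^ 2) x) ^ 2 - α * (1 + y ^ 2) / (sS (y ^ 2) x) ^ 3) := by
    have : (fun t => pdx Φ (t, y)) = g α (y ^ 2) := by
      funext t; exact hpdx t y
    rw [pdx, this]
    exact (hasDerivAt_g α (y ^ 2) x hy2).deriv
  have hyy : pdy (pdy Φ) (x, y) =
      Real.exp (-α * sS (x ^ 2) y) *
        (α ^ 2 * y ^ 2 / (sS (x ^ 2) y) ^ 2 - α * (1 + x ^ 2) / (sS (x ^ 2) y) ^ 3) := by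
    have : (fun t => pdy Φ (x, t)) = g α (x ^ 2) := by
      funext t; exact hpdy x t
    rw [pdy, this]
    exact (hasDerivAt_g α (x ^ 2) y hx2).deriv
  have hswap : sS (x ^ 2) y = sS (y ^ 2) x := by
    unfold sS; ring_nf
  set S := sS (y ^ 2) x with hSdef
  have hS : 0 < S := sS_pos _ _ hy2
  have hSsq : S ^ 2 = 1 + (x ^ 2 + y ^ 2) := sS_sq _ _ hy2
  have hE : Real.exp (-α * sS (y ^ 2) x) = Φ (x, y) := by
    rw [hΦ (x, y)]
    unfold sS
    norm_num
  rw [lap, hxx, hyy, hswap, hE]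
  have hEpos : 0 < Φ (x, y) := by rw [hΦ]; exact Real.exp_pos _
  have key : -(Φ (x, y) * (α ^ 2 * x ^ 2 / S ^ 2 - α * (1 + y ^ 2) / S ^ 3) +
      Φ (x, y) * (α ^ 2 * y ^ 2 / S ^ 2 - α * (1 + x ^ 2) / S ^ 3)) + α ^ 2 * Φ (x, y)
      = Φ (x, y) * ((α ^ 2 * (S ^ 2 - (x ^ 2 + y ^ 2)) * S + α * (2 + (x ^ 2 + y ^ 2))) / S ^ 3) := by
    field_simp
    ring
  rw [key, hSsq]
  have h1 : (1 : ℝ) + (x ^ 2 + y ^ 2) - (x ^ 2 + y ^ 2) = 1 := by ring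
  rw [h1]
  positivity
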